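/- Let Γ be a group with finite symmetric minimal generating set S of size D, and for n ≥ 1 let S_n denote the set of elements of the sphere of radius n around the identity in Cay(Γ,S) expressible as words g_1 g_2 ⋯ g_n with g_i ∈ S and g_i ∉ {g_j, g_j^{-1}} for all i ≠ j. Then every element v = g_1⋯g_n ∈ S_n has at least D - 2n right-neighbours v g_{n+1} lying in S_{n+1}. -/

import Mathlib

/-- The ball of radius `n` around the identity in the Cayley graph of a group
with generating set `S`. -/
def cayleyBall {Γ : Type u} [Group Γ] (S : Finset Γ) (n : ℕ) : Set Γ :=
  {x | ∃ l : List Γ, (∀ g ∈ l, g ∈ S) ∧ l.length ≤ n ∧ l.prod = x}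

/-- `indepSphere S n` is the set of elements of the sphere of radius `n`
expressible as words `g₁ ⋯ g_n` whose letters are pairwise distinct and
pairwise not inverse to each other. -/
def indepSphere {Γ : Type u} [Group Γ] (S : Finset Γ) (n : ℕ) : Set Γ :=
  {x | x ∉ cayleyBall S (n - 1) ∧
    ∃ g : Fin n → Γ, (∀ i, g i ∈ S) ∧
      (∀ i j, i ≠ j → g i ≠ g j ∧ g i ≠ (g j)⁻¹) ∧ (List.ofFn g).prod = x}

/-- Every element of `indepSphere S n` has at least `D - 2n` right-neighbours
in `indepSphere S (n+1)`. -/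
theorem indepSphere_expansion
    {Γ : Type*} [Group Γ] (S : Finset Γ) (D : ℕ) (hD : S.card = D)
    (hsymm : ∀ s ∈ S, s⁻¹ ∈ S)
    (hgen : Subgroup.closure (S : Set Γ) = ⊤)
    (hmin : ∀ T : Finset Γ, T ⊂ S → Subgroup.closure (T : Set Γ) ≠ ⊤)
    (n : ℕ) (hn : 1 ≤ n) (v : Γ) (hv : v ∈ indepSphere S n) :
    (D : ℤ) - 2 * n ≤ (Set.ncard {s : Γ | s ∈ S ∧ v * s ∈ indepSphere S (n + 1)} : ℤ) := by
  classical
  obtain ⟨hvb, g, hgS, hind, hgprod⟩ := hv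
  have hginj : Function.Injective g := by
    intro i j hij
    by_contra hne
    exact (hind i j hne).1 hij
  -- a generator is never in the closure of the other generators
  have hnotin : ∀ t ∈ S, t ∉ Subgroup.closure ((S.erase t : Finset Γ) : Set Γ) := by
    intro t ht hmem
    apply hmin (S.erase t) (Finset.erase_ssubset ht)
    rw [eq_top_iff, ← hgen, Subgroup.closure_le]
    intro x hx
    by_cases hxt : x = t
    · subst hxt; exact hmem
    · exact Subgroup.subset_closure
        (Finset.mem_coe.mpr (Finset.mem_erase.mpr ⟨hxt, hx⟩))
  -- products of letters avoiding `t` lie in the closure of the other generators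
  have key : ∀ (t : Γ) (l : List Γ), (∀ x ∈ l, x ∈ S) → (∀ x ∈ l, x ≠ t) →
      l.prod ∈ Subgroup.closure ((S.erase t : Finset Γ) : Set Γ) := by
    intro t l hS hne
    exact list_prod_mem (fun x hx => Subgroup.subset_closure
      (Finset.mem_coe.mpr (Finset.mem_erase.mpr ⟨hne x hx, hS x hx⟩)))
  -- the key ball estimate
  have hball : ∀ s ∈ S, (∀ i, s ≠ g i) → v * s ∉ cayleyBall S n := by
    rintro s hs hsg ⟨l, hlS, hlen, hlprod⟩
    -- s must occur in l
    have hsl : s ∈ l := by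
      by_contra hsl
      apply hnotin s hs
      have hv' : v ∈ Subgroup.closure ((S.erase s : Finset Γ) : Set Γ) := by
        rw [← hgprod]
        refine key s _ ?_ ?_ <;> intro x hx <;>
          obtain ⟨i, rfl⟩ := List.mem_ofFn.mp hx
        · exact hgS i
        · exact fun h => hsg i h.symm
      have hmem2 := mul_mem (inv_mem hv')
        (key s l hlS (fun x hx hxs => hsl (by rw [← hxs]; exact hx)))
      rw [hlprod] at hmem2
      simpa using hmem2
    -- every g i must occur in l
    have hgl : ∀ i, g i ∈ l := by
      intro i
      by_contra hgl
      apply hnotin (g i) (hgS i)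
      have hmem : g i ∈ List.ofFn g := List.mem_ofFn.mpr ⟨i, rfl⟩
      obtain ⟨A, B, hAB⟩ := List.append_of_mem hmem
      have hnd : (List.ofFn g).Nodup := List.nodup_ofFn.mpr hginj
      rw [hAB] at hnd
      rw [List.nodup_append] at hnd
      have htA : g i ∉ A := fun h => hnd.2.2 _ h _ List.mem_cons_self rfl
      have htB : g i ∉ B := (List.nodup_cons.mp hnd.2.1).1
      have hvdec : v = A.prod * (g i * B.prod) := by
        rw [← hgprod, hAB, List.prod_append, List.prod_cons]
      have hmemA : ∀ x ∈ A, x ∈ List.ofFn g := by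
        intro x hx; rw [hAB]; exact List.mem_append_left _ hx
      have hmemB : ∀ x ∈ B, x ∈ List.ofFn g := by
        intro x hx; rw [hAB]; exact List.mem_append_right _ (List.mem_cons_of_mem _ hx)
      have hA : A.prod ∈ Subgroup.closure ((S.erase (g i) : Finset Γ) : Set Γ) := by
        refine key _ _ ?_ ?_ <;> intro x hx
        · obtain ⟨j, rfl⟩ := List.mem_ofFn.mp (hmemA x hx); exact hgS j
        · exact fun h => htA (h ▸ hx)
      have hB : B.prod ∈ Subgroup.closure ((S.erase (g i) : Finset Γ) : Set Γ) := by
        refine key _ _ ?_ ?_ <;> intro x hx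
        · obtain ⟨j, rfl⟩ := List.mem_ofFn.mp (hmemB x hx); exact hgS j
        · exact fun h => htB (h ▸ hx)
      have hl : l.prod ∈ Subgroup.closure ((S.erase (g i) : Finset Γ) : Set Γ) :=
        key _ _ hlS (fun x hx hxi => hgl (by rw [← hxi]; exact hx))
      have hsmem : s ∈ Subgroup.closure ((S.erase (g i) : Finset Γ) : Set Γ) :=
        Subgroup.subset_closure (Finset.mem_coe.mpr
          (Finset.mem_erase.mpr ⟨hsg i, hs⟩))
      have hmem2 : A.prod⁻¹ * (l.prod * (s⁻¹ * B.prod⁻¹)) ∈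
          Subgroup.closure ((S.erase (g i) : Finset Γ) : Set Γ) :=
        mul_mem (inv_mem hA) (mul_mem hl (mul_mem (inv_mem hsmem) (inv_mem hB)))
      have heq : A.prod⁻¹ * (l.prod * (s⁻¹ * B.prod⁻¹)) = g i := by
        rw [hlprod, hvdec]; group
      exact heq ▸ hmem2
    -- cardinality contradiction
    have hsub : insert s (Finset.image g Finset.univ) ⊆ l.toFinset := by
      intro x hx
      rcases Finset.mem_insert.mp hx with h | h
      · exact List.mem_toFinset.mpr (h ▸ hsl)
      · obtain ⟨i, _, rfl⟩ := Finset.mem_image.mp h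
        exact List.mem_toFinset.mpr (hgl i)
    have hcard1 : (insert s (Finset.image g Finset.univ)).card = n + 1 := by
      rw [Finset.card_insert_of_notMem, Finset.card_image_of_injective _ hginj]
      · simp
      · intro h
        obtain ⟨i, _, hi⟩ := Finset.mem_image.mp h
        exact hsg i hi.symm
    have hcard2 : l.toFinset.card ≤ n := le_trans l.toFinset_card_le hlen
    have := Finset.card_le_card hsub
    omega
  -- good generators give elements of the next indepSphere
  have hgood : ∀ s ∈ S, (∀ i, s ≠ g i) → (∀ i, s ≠ (g i)⁻¹) →
      v * s ∈ indepSphere S (n + 1) := by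
    intro s hs h1 h2
    refine ⟨hball s hs h1, Fin.snoc g s, ?_, ?_, ?_⟩
    · intro i
      refine Fin.lastCases ?_ ?_ i
      · rw [Fin.snoc_last]; exact hs
      · intro j; rw [Fin.snoc_castSucc]; exact hgS j
    · intro i j hij
      obtain ⟨i', rfl⟩ | rfl := Fin.eq_castSucc_or_eq_last i <;>
        obtain ⟨j', rfl⟩ | rfl := Fin.eq_castSucc_or_eq_last j
      · simp only [Fin.snoc_castSucc]
        exact hind i' j' (fun h => hij (by rw [h]))
      · simp only [Fin.snoc_last, Fin.snoc_castSucc]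
        refine ⟨fun h => h1 i' h.symm, fun h => h2 i' ?_⟩
        rw [h, inv_inv]
      · simp only [Fin.snoc_last, Fin.snoc_castSucc]
        exact ⟨fun h => h1 j' h, fun h => h2 j' h⟩
      · exact absurd rfl hij
    · rw [List.ofFn_succ', List.concat_eq_append, List.prod_append]
      simp [hgprod]
  -- counting
  set Bad : Finset Γ :=
    Finset.image g Finset.univ ∪ Finset.image (fun i => (g i)⁻¹) Finset.univ with hBad
  have hsub : ((S \ Bad : Finset Γ) : Set Γ) ⊆
      {s : Γ | s ∈ S ∧ v * s ∈ indepSphere S (n + 1)} := by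
    intro s hsmem
    rw [Finset.mem_coe, Finset.mem_sdiff] at hsmem
    obtain ⟨hsS, hsB⟩ := hsmem
    simp only [hBad, Finset.mem_union, Finset.mem_image, Finset.mem_univ, true_and,
      not_or, not_exists] at hsB
    exact ⟨hsS, hgood s hsS (fun i h => hsB.1 i h.symm) (fun i h => hsB.2 i h.symm)⟩
  have hfin : {s : Γ | s ∈ S ∧ v * s ∈ indepSphere S (n + 1)}.Finite :=
    Set.Finite.subset S.finite_toSet (fun x hx => hx.1)
  have h1 : (S \ Bad).card ≤
      Set.ncard {s : Γ | s ∈ S ∧ v * s ∈ indepSphere S (n + 1)} := by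
    rw [← Set.ncard_coe_finset]
    exact Set.ncard_le_ncard hsub hfin
  have h2 : Bad.card ≤ 2 * n := by
    refine le_trans (Finset.card_union_le _ _) ?_
    have := Finset.card_image_le (s := (Finset.univ : Finset (Fin n))) (f := g)
    have := Finset.card_image_le (s := (Finset.univ : Finset (Fin n)))
      (f := fun i => (g i)⁻¹)
    simp only [Finset.card_univ, Fintype.card_fin] at *
    omega
  have h3 : S.card ≤ (S \ Bad).card + Bad.card := Finset.card_le_card_sdiff_add_card
  rw [← hD]
  omega
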